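/- Let μ_n be the largest eigenvalue of the operator x + x^{-1} + y + y^{-1} in any of the n-dimensional representations T_q (1 ≤ q ≤ n-1) of the finite Heisenberg group H_n. Then for all sufficiently large n, μ_n ≤ 4 - 3/(5n). -/

import Mathlib

open Real Matrix

/-- The n × n matrix of the operator x + x⁻¹ + y + y⁻¹ in the representation T_q of
the finite Heisenberg group: diagonal entries 2cos(2πqk/n), ones on the first super-
and sub-diagonals and in the corners (periodic tridiagonal). -/
noncomputable def heisMatrix (n q : ℕ) : Matrix (Fin n) (Fin n) ℝ :=
  Matrix.of fun i j : Fin n =>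
    if i = j then 2 * Real.cos (2 * Real.pi * q * (i : ℕ) / n)
    else if ((i : ℕ) + 1) % n = (j : ℕ) ∨ ((j : ℕ) + 1) % n = (i : ℕ) then 1
    else 0

private lemma exp_le_quad {z : ℝ} (hz : z ≤ 1/2) : Real.exp z ≤ 1 + z + 2*z^2 := by
  have h2 : 0 < 1 - z := by linarith
  have h1 : 1 - z ≤ Real.exp (-z) := by have := Real.add_one_le_exp (-z); linarith
  have h5 : Real.exp z * (1 - z) ≤ 1 := by
    calc Real.exp z * (1 - z) ≤ Real.exp z * Real.exp (-z) :=
          mul_le_mul_of_nonneg_left h1 (Real.exp_pos z).le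
      _ = 1 := by rw [← Real.exp_add]; simp
  nlinarith [mul_nonneg (sq_nonneg z) (sub_nonneg.mpr hz), Real.exp_pos z]

private lemma key_xy {lam t x y : ℝ} (hl0 : 0 < lam) (hl : lam ≤ 1/100)
    (ht : t^2 ≤ 9/100) (hxy : x^2 + y^2 = 1) :
    Real.exp (-lam*x - t*y) + Real.exp (-lam*x + t*y) ≤ 4 - lam - 2*x := by
  have hx1 : x ≤ 1 := by nlinarith [sq_nonneg y]
  have hx1' : -1 ≤ x := by nlinarith [sq_nonneg y]
  have hy1 : y ≤ 1 := by nlinarith [sq_nonneg x]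
  have hy1' : -1 ≤ y := by nlinarith [sq_nonneg x]
  have htabs : -(3/10) ≤ t ∧ t ≤ 3/10 := by constructor <;> nlinarith [sq_nonneg t]
  have hty : -(3/10) ≤ t*y ∧ t*y ≤ 3/10 := by
    obtain ⟨h1, h2⟩ := htabs
    constructor <;> nlinarith
  have hlx : -(1/100) ≤ lam*x ∧ lam*x ≤ 1/100 := by
    constructor <;> nlinarith
  have hz1 : -lam*x - t*y ≤ 1/2 := by nlinarith [hty.1, hlx.1]
  have hz2 : -lam*x + t*y ≤ 1/2 := by nlinarith [hty.2, hlx.1]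
  have e1 := exp_le_quad hz1
  have e2 := exp_le_quad hz2
  have hA : 0 ≤ 1 - x := by linarith
  have hB : 0 ≤ 1 + x := by linarith
  nlinarith [e1, e2, mul_nonneg (mul_nonneg hA hB) (sq_nonneg t),
    mul_nonneg (mul_nonneg hA hB) (sq_nonneg lam),
    mul_nonneg hA hB, sq_nonneg (lam*x), mul_nonneg hA (sq_nonneg lam),
    mul_nonneg hA (sq_nonneg t), sq_nonneg t, sq_nonneg lam]

private lemma key_theta {lam s α θ : ℝ} (hl0 : 0 < lam) (hl : lam ≤ 1/100)
    (hδ : 0 < 1 - Real.cos α) (hs : s = lam / (1 - Real.cos α))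
    (ht : (s * Real.sin α)^2 ≤ 9/100) :
    Real.exp (s * Real.cos (θ + α)) + Real.exp (s * Real.cos (θ - α))
      ≤ (4 - lam - 2 * Real.cos θ) * Real.exp (s * Real.cos θ) := by
  set x := Real.cos θ with hx
  set y := Real.sin θ with hy
  set t := s * Real.sin α with htdef
  have hsl : s * (1 - Real.cos α) = lam := by rw [hs]; field_simp
  have e1 : s * Real.cos (θ + α) = s * x + (-lam*x - t*y) := by
    rw [Real.cos_add]; linear_combination (-x) * hsl
  have e2 : s * Real.cos (θ - α) = s * x + (-lam*x + t*y) := by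
    rw [Real.cos_sub]; linear_combination (-x) * hsl
  have hxy : x^2 + y^2 = 1 := by
    rw [hx, hy, add_comm]; exact Real.sin_sq_add_cos_sq θ
  have hk := key_xy hl0 hl ht hxy
  calc Real.exp (s * Real.cos (θ + α)) + Real.exp (s * Real.cos (θ - α))
      = (Real.exp (-lam*x - t*y) + Real.exp (-lam*x + t*y)) * Real.exp (s * x) := by
        rw [e1, e2, Real.exp_add, Real.exp_add]; ring
    _ ≤ (4 - lam - 2*x) * Real.exp (s * x) :=
        mul_le_mul_of_nonneg_right hk (Real.exp_pos _).le

private lemma delta_lb {n q : ℕ} (hn : 100 ≤ n) (hq1 : 1 ≤ q) (hq2 : q ≤ n - 1) :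
    8 / (n:ℝ)^2 ≤ 1 - Real.cos (2*π*(q:ℝ)/n) := by
  have hn0 : (0:ℝ) < n := by exact_mod_cast Nat.pos_of_ne_zero (by omega)
  have hq : q < n := by omega
  obtain ⟨m, hm1, hm2, hmcos⟩ : ∃ m : ℕ, 1 ≤ m ∧ 2*m ≤ n ∧
      Real.cos (2*π*(q:ℝ)/n) = Real.cos (2*π*(m:ℝ)/n) := by
    rcases le_or_gt (2*q) n with h | h
    · exact ⟨q, hq1, h, rfl⟩
    · refine ⟨n - q, by omega, by omega, ?_⟩
      have hcast : ((n - q : ℕ):ℝ) = (n:ℝ) - q := by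
        push_cast [Nat.cast_sub hq.le]; ring
      rw [hcast, show 2*π*((n:ℝ)-q)/n = 2*π - 2*π*(q:ℝ)/n from by field_simp,
        Real.cos_two_pi_sub]
  rw [hmcos]
  set x : ℝ := 2*π*(m:ℝ)/n with hxdef
  have hpi := Real.pi_pos
  have hx0 : 0 ≤ x := by positivity
  have hxpi : x ≤ π := by
    rw [hxdef, div_le_iff₀ hn0]
    have h2m : ((2*m:ℕ) : ℝ) ≤ (n:ℝ) := by exact_mod_cast hm2
    push_cast at h2m
    nlinarith
  have hcos := Real.cos_le_one_sub_mul_cos_sq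
    (abs_le.mpr ⟨by linarith, hxpi⟩ : |x| ≤ π)
  have hm1' : (1:ℝ) ≤ m := by exact_mod_cast hm1
  have hxsq : 2/π^2 * x^2 = 8*(m:ℝ)^2/(n:ℝ)^2 := by
    rw [hxdef]; field_simp; ring
  have h8 : 8/(n:ℝ)^2 ≤ 8*(m:ℝ)^2/(n:ℝ)^2 := by
    gcongr
    nlinarith
  linarith [hcos, hxsq ▸ h8]

private lemma cos_int_congr (n : ℕ) (hn : 0 < n) (q : ℕ) (a : ℤ) (b : ℕ)
    (h : (n:ℤ) ∣ a - b) :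
    Real.cos (2*π*(q:ℝ)*(a:ℝ)/n) = Real.cos (2*π*(q:ℝ)*(b:ℝ)/n) := by
  obtain ⟨z, hz⟩ := h
  have hnR : ((n:ℝ)) ≠ 0 := by
    exact_mod_cast Nat.pos_iff_ne_zero.mp hn
  have ha : (a:ℝ) = (b:ℝ) + (n:ℝ)*(z:ℝ) := by
    have : (a:ℝ) - b = (n:ℝ)*z := by exact_mod_cast congrArg (Int.cast : ℤ → ℝ) hz
    linarith
  have harg : 2*π*(q:ℝ)*(a:ℝ)/n = 2*π*(q:ℝ)*(b:ℝ)/n + ((q*z : ℤ):ℝ) * (2*π) := by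
    rw [ha]; push_cast; field_simp
  rw [harg, Real.cos_add_int_mul_two_pi]

private lemma fin_add_one_val {n : ℕ} [NeZero n] (hn : 2 ≤ n) (k : Fin n) :
    ((k+1 : Fin n) : ℕ) = ((k:ℕ) + 1) % n := by
  rw [Fin.val_add, Fin.val_one', Nat.mod_eq_of_lt (show 1 < n by omega)]

private lemma fin_sub_one_val {n : ℕ} [NeZero n] (hn : 2 ≤ n) (k : Fin n) :
    (((k-1 : Fin n) : ℕ) + 1) % n = (k:ℕ) := by
  have h := congrArg Fin.val (sub_add_cancel k 1)
  rwa [Fin.val_add, Fin.val_one', Nat.mod_eq_of_lt (show 1 < n by omega)] at h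

private lemma mulVec_heis {n : ℕ} [NeZero n] (hn : 3 ≤ n) (q : ℕ) (v : Fin n → ℝ)
    (k : Fin n) :
    (heisMatrix n q *ᵥ v) k
      = 2 * Real.cos (2 * π * (q:ℝ) * ((k : ℕ):ℝ) / n) * v k + v (k+1) + v (k-1) := by
  have h1n : (1 : Fin n).val = 1 := by
    rw [Fin.val_one', Nat.mod_eq_of_lt (by omega)]
  have hvadd : ∀ j : Fin n, ((j+1 : Fin n) : ℕ) = ((j:ℕ) + 1) % n :=
    fun j => fin_add_one_val (by omega) j
  have hone_ne : (1 : Fin n) ≠ 0 := by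
    intro h
    have := congrArg Fin.val h
    rw [h1n] at this
    simp at this
  have htwo_ne : (1 : Fin n) + 1 ≠ 0 := by
    intro h
    have := congrArg Fin.val h
    rw [Fin.val_add, h1n, Fin.val_zero, Nat.mod_eq_of_lt (by omega)] at this
    simp at this
  have hsub1 : (k - 1) + 1 = k := sub_add_cancel k 1
  have hvsub : (((k-1 : Fin n) : ℕ) + 1) % n = (k:ℕ) := fin_sub_one_val (by omega) k
  have hk1 : k ≠ k + 1 := by
    intro h
    apply hone_ne
    have h0 : (k+1) - k = 0 := sub_eq_zero_of_eq h.symm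
    rw [← h0]; abel
  have hk2 : k ≠ k - 1 := by
    intro h
    apply hone_ne
    have h0 : k - (k-1) = 0 := sub_eq_zero_of_eq h
    rw [← h0]; abel
  have hk3 : k + 1 ≠ k - 1 := by
    intro h
    apply htwo_ne
    have h0 : (k+1) - (k-1) = 0 := sub_eq_zero_of_eq h
    rw [← h0]; abel
  have hzero : ∀ j ∈ Finset.univ, j ∉ ({k, k+1, k-1} : Finset (Fin n)) →
      heisMatrix n q k j * v j = 0 := by
    intro j _ hj
    simp only [Finset.mem_insert, Finset.mem_singleton, not_or] at hj
    obtain ⟨hjk, hjp, hjm⟩ := hj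
    have e1 : k ≠ j := fun h => hjk h.symm
    have e2 : ¬ (((k:ℕ) + 1) % n = (j:ℕ)) := by
      intro h
      exact hjp (Fin.ext (by rw [hvadd, h])).symm
    have e3 : ¬ (((j:ℕ) + 1) % n = (k:ℕ)) := by
      intro h
      apply hjm
      have hjadd : j + 1 = k := Fin.ext (by rw [hvadd]; exact h)
      rw [← hjadd]
      simp
    simp [heisMatrix, e1, e2, e3]
  have hsum : (heisMatrix n q *ᵥ v) k
      = ∑ j ∈ ({k, k+1, k-1} : Finset (Fin n)), heisMatrix n q k j * v j := by
    rw [mulVec, dotProduct]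
    exact (Finset.sum_subset (Finset.subset_univ _)
      (fun j hj hj' => hzero j hj hj')).symm
  rw [hsum]
  rw [Finset.sum_insert (by simp [hk1, hk2]),
    Finset.sum_insert (by simp [hk3]), Finset.sum_singleton]
  have ed : heisMatrix n q k k = 2 * Real.cos (2 * π * (q:ℝ) * ((k:ℕ):ℝ) / n) := by
    simp [heisMatrix]
  have ep : heisMatrix n q k (k+1) = 1 := by
    have h : ((k:ℕ) + 1) % n = ((k+1 : Fin n):ℕ) := (hvadd k).symm
    simp [heisMatrix, hk1, h]
  have em : heisMatrix n q k (k-1) = 1 := by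
    simp [heisMatrix, hk2, hvsub]
  rw [ed, ep, em]
  ring

/-- for all sufficiently large primes n, every eigenvalue of the matrix
of x + x⁻¹ + y + y⁻¹ in any n-dimensional representation T_q (1 ≤ q ≤ n-1) of the
finite Heisenberg group H_n is at most 4 - 3/(5n). -/
theorem heisMatrix_all_q_eigenvalue_upper_bound :
    ∃ N : ℕ, ∀ n : ℕ, N ≤ n → n.Prime →
      ∀ q : ℕ, 1 ≤ q → q ≤ n - 1 →
        ∀ μ ∈ spectrum ℝ (heisMatrix n q), μ ≤ 4 - 3 / (5 * (n : ℝ)) := by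
  refine ⟨100, fun n hn _hp q hq1 hq2 μ hμ => ?_⟩
  haveI : NeZero n := ⟨by omega⟩
  have hn3 : 3 ≤ n := by omega
  have hnR : (0:ℝ) < n := by exact_mod_cast Nat.pos_of_ne_zero (by omega)
  set lam : ℝ := 3 / (5*(n:ℝ)) with hlam_def
  have hl0 : 0 < lam := by positivity
  have hl : lam ≤ 1/100 := by
    rw [hlam_def, div_le_div_iff₀ (by positivity) (by norm_num)]
    have h100 : (100:ℝ) ≤ n := by exact_mod_cast hn
    nlinarith
  set δ : ℝ := 1 - Real.cos (2*π*(q:ℝ)/n) with hδdef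
  have hδ8 : 8/(n:ℝ)^2 ≤ δ := delta_lb hn hq1 hq2
  have hδ0 : 0 < δ := lt_of_lt_of_le (by positivity) hδ8
  have hδ2 : δ ≤ 2 := by
    have := Real.neg_one_le_cos (2*π*(q:ℝ)/n)
    rw [hδdef]; linarith
  set s : ℝ := lam / δ with hsdef
  have ht : (s * Real.sin (2*π*(q:ℝ)/n))^2 ≤ 9/100 := by
    have hsin : Real.sin (2*π*(q:ℝ)/n)^2 = δ*(2-δ) := by
      have h1 := Real.sin_sq_add_cos_sq (2*π*(q:ℝ)/n)
      rw [hδdef]; nlinarith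
    have heq : (s * Real.sin (2*π*(q:ℝ)/n))^2 = lam^2*(2-δ)/δ := by
      rw [hsdef]
      rw [mul_pow, hsin]
      field_simp
    rw [heq]
    have hstep : lam^2*(2-δ)/δ ≤ lam^2*2/(8/(n:ℝ)^2) := by
      apply div_le_div₀ (by positivity)
      · nlinarith [sq_nonneg lam]
      · positivity
      · exact hδ8
    have hval : lam^2*2/(8/(n:ℝ)^2) = 9/100 := by
      rw [hlam_def]
      field_simp
      ring
    linarith
  -- eigenvector
  have hnu : ¬ IsUnit ((algebraMap ℝ (Matrix (Fin n) (Fin n) ℝ)) μ - heisMatrix n q) :=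
    spectrum.mem_iff.mp hμ
  have hdet : ((algebraMap ℝ (Matrix (Fin n) (Fin n) ℝ)) μ - heisMatrix n q).det = 0 := by
    by_contra h
    exact hnu ((Matrix.isUnit_iff_isUnit_det _).mpr (Ne.isUnit h))
  obtain ⟨v, hv0, hveq0⟩ := Matrix.exists_mulVec_eq_zero_iff.mpr hdet
  have hveq : heisMatrix n q *ᵥ v = μ • v := by
    have h2 : (μ • (1:Matrix (Fin n) (Fin n) ℝ) - heisMatrix n q) *ᵥ v = 0 := by
      rw [← Algebra.algebraMap_eq_smul_one]; exact hveq0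
    rw [Matrix.sub_mulVec, Matrix.smul_mulVec, Matrix.one_mulVec, sub_eq_zero] at h2
    exact h2.symm
  -- φ and maximizing index
  set φ : Fin n → ℝ := fun k => Real.exp (s * Real.cos (2*π*(q:ℝ)*((k:ℕ):ℝ)/n)) with hφdef
  have hφpos : ∀ k, 0 < φ k := fun k => Real.exp_pos _
  obtain ⟨k₀, -, hk₀⟩ := Finset.exists_max_image Finset.univ (fun k => |v k| / φ k)
    ⟨⟨0, by omega⟩, Finset.mem_univ _⟩
  set c : ℝ := |v k₀| / φ k₀ with hcdef
  have hbound : ∀ k, |v k| ≤ c * φ k := fun k =>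
    (div_le_iff₀ (hφpos k)).mp (hk₀ k (Finset.mem_univ k))
  have hc0 : 0 < c := by
    obtain ⟨k1, hk1⟩ := Function.ne_iff.mp hv0
    have h1 : 0 < |v k1| / φ k1 := div_pos (abs_pos.mpr hk1) (hφpos k1)
    exact lt_of_lt_of_le h1 (hk₀ k1 (Finset.mem_univ k1))
  have hvk₀ : |v k₀| = c * φ k₀ := (div_mul_cancel₀ _ (hφpos k₀).ne').symm
  have hvk₀pos : 0 < |v k₀| := by rw [hvk₀]; exact mul_pos hc0 (hφpos k₀)
  set dd : ℝ := 2 * Real.cos (2*π*(q:ℝ)*((k₀:ℕ):ℝ)/n) with hdddef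
  -- eigen equation at k₀
  have heig : (μ - dd) * v k₀ = v (k₀+1) + v (k₀-1) := by
    have h1 := mulVec_heis hn3 q v k₀
    rw [hveq] at h1
    simp only [Pi.smul_apply, smul_eq_mul] at h1
    rw [hdddef]
    linear_combination h1
  -- the key bound on φ neighbors
  have hφkey : φ (k₀+1) + φ (k₀-1) ≤ (4 - lam - dd) * φ k₀ := by
    have hdvd1 : (n:ℤ) ∣ (((k₀:ℕ) + 1 : ℤ)) - (((k₀+1 : Fin n):ℕ) : ℤ) := by
      have hval : ((k₀+1 : Fin n):ℕ) = ((k₀:ℕ)+1) % n := fin_add_one_val (by omega) k₀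
      have hdm := Nat.div_add_mod ((k₀:ℕ)+1) n
      refine ⟨(((k₀:ℕ)+1)/n : ℕ), ?_⟩
      rw [hval]
      have hdmz : (n:ℤ) * ((((k₀:ℕ)+1)/n : ℕ):ℤ) + ((((k₀:ℕ)+1) % n : ℕ):ℤ)
          = ((k₀:ℕ):ℤ) + 1 := by exact_mod_cast hdm
      linarith
    have hdvd2 : (n:ℤ) ∣ (((k₀:ℕ) - 1 : ℤ)) - (((k₀-1 : Fin n):ℕ) : ℤ) := by
      have hval : (((k₀-1 : Fin n):ℕ) + 1) % n = (k₀:ℕ) := fin_sub_one_val (by omega) k₀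
      have hdm := Nat.div_add_mod (((k₀-1 : Fin n):ℕ)+1) n
      rw [hval] at hdm
      refine ⟨-((((k₀-1 : Fin n):ℕ)+1)/n : ℕ), ?_⟩
      have hdmz : (n:ℤ) * (((((k₀-1 : Fin n):ℕ)+1)/n : ℕ):ℤ) + ((k₀:ℕ):ℤ)
          = (((k₀-1 : Fin n):ℕ):ℤ) + 1 := by exact_mod_cast hdm
      linarith
    have hp := cos_int_congr n (by omega) q ((k₀:ℕ) + 1 : ℤ) ((k₀+1 : Fin n):ℕ) hdvd1
    have hm := cos_int_congr n (by omega) q ((k₀:ℕ) - 1 : ℤ) ((k₀-1 : Fin n):ℕ) hdvd2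
    push_cast at hp hm
    have hθp : 2*π*(q:ℝ)*(((k₀:ℕ):ℝ)+1)/n
        = 2*π*(q:ℝ)*((k₀:ℕ):ℝ)/n + 2*π*(q:ℝ)/n := by ring
    have hθm : 2*π*(q:ℝ)*(((k₀:ℕ):ℝ)-1)/n
        = 2*π*(q:ℝ)*((k₀:ℕ):ℝ)/n - 2*π*(q:ℝ)/n := by ring
    have hkey := key_theta hl0 hl hδ0 (by rw [hsdef, hδdef]) ht
      (θ := 2*π*(q:ℝ)*((k₀:ℕ):ℝ)/n)
    show Real.exp (s * Real.cos (2*π*(q:ℝ)*(((k₀+1 : Fin n):ℕ):ℝ)/n))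
        + Real.exp (s * Real.cos (2*π*(q:ℝ)*(((k₀-1 : Fin n):ℕ):ℝ)/n))
        ≤ (4 - lam - dd) * Real.exp (s * Real.cos (2*π*(q:ℝ)*((k₀:ℕ):ℝ)/n))
    rw [hdddef, ← hp, ← hm, hθp, hθm]
    exact hkey
  -- conclude
  have habs : |μ - dd| * |v k₀| ≤ (4 - lam - dd) * |v k₀| := by
    calc |μ - dd| * |v k₀| = |(μ - dd) * v k₀| := (abs_mul _ _).symm
      _ = |v (k₀+1) + v (k₀-1)| := by rw [heig]
      _ ≤ |v (k₀+1)| + |v (k₀-1)| := abs_add_le _ _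
      _ ≤ c * φ (k₀+1) + c * φ (k₀-1) := add_le_add (hbound _) (hbound _)
      _ = c * (φ (k₀+1) + φ (k₀-1)) := by ring
      _ ≤ c * ((4 - lam - dd) * φ k₀) := mul_le_mul_of_nonneg_left hφkey hc0.le
      _ = (4 - lam - dd) * |v k₀| := by rw [hvk₀]; ring
  have hfin : |μ - dd| ≤ 4 - lam - dd := le_of_mul_le_mul_right habs hvk₀pos
  have := le_abs_self (μ - dd)
  linarith
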